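/- Let X be a topological space and n an integer with 1 < n < ω. Suppose there exists A ⊆ X with |A| = n − 1 such that A = ⋂{cl_θ(⋂C) : C a choice of closed neighborhoods of the points of A} and for every B ⊆ X with |B| ≥ n, ⋂{cl_θ(⋂C) : C a choice of closed neighborhoods of the points of B} = ∅. Then U(X) = n. -/

import Mathlib

open Set Topology Cardinal

universe u

variable {X : Type u}

/-- The θ-closure of a set. -/
def thetaCl [TopologicalSpace X] (A : Set X) : Set X :=
  {x | ∀ U : Set X, IsOpen U → x ∈ U → (closure U ∩ A).Nonempty}

/-- The θ-closed hull of a set. -/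
def thetaHull [TopologicalSpace X] (A : Set X) : Set X :=
  ⋂₀ {C : Set X | thetaCl C = C ∧ A ⊆ C}

/-- A nonempty set is finitely non-Urysohn if every finite choice of closed
neighborhoods (closures of open neighborhoods) of finitely many of its points
has nonempty intersection. -/
def FinNonUrysohn [TopologicalSpace X] (A : Set X) : Prop :=
  A.Nonempty ∧ ∀ F : Set X, F ⊆ A → F.Nonempty → F.Finite →
    ∀ U : X → Set X, (∀ x ∈ F, IsOpen (U x) ∧ x ∈ U x) →
      (⋂ x ∈ F, closure (U x)).Nonempty

/-- The non-Urysohn number `nu(X)`. -/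
noncomputable def nuNumber (X : Type u) [TopologicalSpace X] : Cardinal.{u} :=
  1 + ⨆ A : {A : Set X // FinNonUrysohn A}, #↥A.1

/-- The Urysohn number `U(X)`. -/
noncomputable def UrysohnNumber (X : Type u) [TopologicalSpace X] : Cardinal.{u} :=
  sInf {κ : Cardinal.{u} | ∀ A : Set X, κ ≤ #↥A → ∃ U : X → Set X,
    (∀ a ∈ A, IsOpen (U a) ∧ a ∈ U a) ∧ (⋂ a ∈ A, closure (U a)) = ∅}

/-- The cardinal function `κ(X)`: the smallest infinite cardinal such that each
point has a family of at most that many closed neighborhoods cofinal (under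
reverse inclusion) in the closures of its open neighborhoods. -/
noncomputable def kappaInv (X : Type u) [TopologicalSpace X] : Cardinal.{u} :=
  sInf {κ : Cardinal.{u} | ℵ₀ ≤ κ ∧ ∀ x : X, ∃ V : Set (Set X), #↥V ≤ κ ∧
    (∀ W ∈ V, IsClosed W ∧ W ∈ nhds x) ∧
    ∀ U : Set X, IsOpen U → x ∈ U → ∃ W ∈ V, W ⊆ closure U}

/-- The character `χ(X)`. -/
noncomputable def chiChar (X : Type u) [TopologicalSpace X] : Cardinal.{u} :=
  sInf {κ : Cardinal.{u} | ℵ₀ ≤ κ ∧ ∀ x : X, ∃ B : Set (Set X), #↥B ≤ κ ∧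
    (∀ U ∈ B, U ∈ nhds x) ∧ ∀ S ∈ nhds x, ∃ U ∈ B, U ⊆ S}

/-- The θ-density `d_θ(X)`. -/
noncomputable def dTheta (X : Type u) [TopologicalSpace X] : Cardinal.{u} :=
  sInf {c : Cardinal.{u} | ∃ A : Set X, thetaCl A = Set.univ ∧ #↥A = c}

/-- The cardinal function `sL_θ(X)`. -/
noncomputable def sLtheta (X : Type u) [TopologicalSpace X] : Cardinal.{u} :=
  sInf {τ : Cardinal.{u} | ℵ₀ ≤ τ ∧ ∀ A : Set X, ∀ 𝒰 : Set (Set X),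
    (∀ U ∈ 𝒰, IsOpen U) → thetaCl A ⊆ ⋃₀ 𝒰 →
    ∃ 𝒱 ⊆ 𝒰, #↥𝒱 ≤ τ ∧ A ⊆ closure (⋃₀ 𝒱)}

/-- The cardinal function `wL_c(X)`. -/
noncomputable def wLc (X : Type u) [TopologicalSpace X] : Cardinal.{u} :=
  sInf {τ : Cardinal.{u} | ℵ₀ ≤ τ ∧ ∀ A : Set X, IsClosed A → ∀ 𝒰 : Set (Set X),
    (∀ U ∈ 𝒰, IsOpen U) → A ⊆ ⋃₀ 𝒰 →
    ∃ 𝒱 ⊆ 𝒰, #↥𝒱 ≤ τ ∧ A ⊆ closure (⋃₀ 𝒱)}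

/-- The almost Lindelöf degree `aL(X)`. -/
noncomputable def aLdeg (X : Type u) [TopologicalSpace X] : Cardinal.{u} :=
  sInf {τ : Cardinal.{u} | ℵ₀ ≤ τ ∧ ∀ 𝒰 : Set (Set X),
    (∀ U ∈ 𝒰, IsOpen U) → ⋃₀ 𝒰 = Set.univ →
    ∃ 𝒱 ⊆ 𝒰, #↥𝒱 ≤ τ ∧ (⋃ V ∈ 𝒱, closure V) = Set.univ}

/-- `X` is a Urysohn space: distinct points have open neighborhoods with
disjoint closures. -/
def UrysohnSpace (X : Type u) [TopologicalSpace X] : Prop :=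
  ∀ x y : X, x ≠ y → ∃ U V : Set X, IsOpen U ∧ IsOpen V ∧ x ∈ U ∧ y ∈ V ∧
    closure U ∩ closure V = ∅

/-- For a set `S`, the intersection over all choices of closed neighborhoods of
the points of `S` of the θ-closures of the intersections of the choices. -/
def capSet [TopologicalSpace X] (S : Set X) : Set X :=
  {y | ∀ U : X → Set X, (∀ a ∈ S, IsOpen (U a) ∧ a ∈ U a) →
    y ∈ thetaCl (⋂ a ∈ S, closure (U a))}

/-- For a set `M`, the intersection over all nonempty finite `F ⊆ M` and all
choices of open neighborhoods of points of `F` of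
`cl_θ(⋂_{x∈F} closure (U x))`. -/
def fnuCap [TopologicalSpace X] (M : Set X) : Set X :=
  {y | ∀ F : Set X, F ⊆ M → F.Nonempty → F.Finite → ∀ U : X → Set X,
    (∀ x ∈ F, IsOpen (U x) ∧ x ∈ U x) →
    y ∈ thetaCl (⋂ x ∈ F, closure (U x))}

theorem statement15 [TopologicalSpace X] (n : ℕ) (hn : 1 < n)
    (A : Set X) (hcard : #↥A = (n - 1 : ℕ)) (hA : A = capSet A)
    (hB : ∀ B : Set X, (n : Cardinal) ≤ #↥B → capSet B = ∅) :
    UrysohnNumber X = n := by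
  have hA_ne : A.Nonempty := by
    rw [Set.nonempty_iff_ne_empty]
    intro h
    rw [h] at hcard
    simp only [Set.isEmpty_coe_sort, Cardinal.mk_eq_zero] at hcard
    have : ((n - 1 : ℕ) : Cardinal) = 0 := hcard.symm
    rw [Nat.cast_eq_zero] at this
    omega
  have hmem : ∀ B : Set X, (n : Cardinal) ≤ #↥B → ∃ U : X → Set X,
      (∀ a ∈ B, IsOpen (U a) ∧ a ∈ U a) ∧ (⋂ a ∈ B, closure (U a)) = ∅ := by
    classical
    intro B hB'
    have hBne : B.Nonempty := by
      rw [Set.nonempty_iff_ne_empty]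
      intro h
      rw [h] at hB'
      simp only [Cardinal.mk_eq_zero, Set.isEmpty_coe_sort] at hB'
      have : (n : Cardinal.{u}) = 0 := le_antisymm (by simpa using hB') zero_le
      rw [Nat.cast_eq_zero] at this
      omega
    obtain ⟨b, hb⟩ := hBne
    have hbnot : b ∉ capSet B := by rw [hB B hB']; exact Set.notMem_empty b
    simp only [capSet, Set.mem_setOf_eq, not_forall] at hbnot
    obtain ⟨U, hU, hnotθ⟩ := hbnot
    simp only [thetaCl, Set.mem_setOf_eq, not_forall] at hnotθ
    obtain ⟨V, hVopen, hbV, hVempty⟩ := hnotθ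
    rw [Set.not_nonempty_iff_eq_empty] at hVempty
    refine ⟨fun a => if a = b then U a ∩ V else U a, ?_, ?_⟩
    · intro a ha
      by_cases h : a = b
      · subst h
        simp only [if_pos rfl]
        exact ⟨(hU a ha).1.inter hVopen, (hU a ha).2, hbV⟩
      · simp only [if_neg h]
        exact hU a ha
    · apply Set.eq_empty_of_subset_empty
      intro y hy
      rw [← hVempty]
      simp only [Set.mem_iInter] at hy
      constructor
      · have := hy b hb
        simp only [if_pos rfl] at this
        exact closure_mono Set.inter_subset_right this
      · simp only [Set.mem_iInter]
        intro a ha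
        have := hy a ha
        by_cases h : a = b
        · rw [if_pos h] at this
          exact closure_mono Set.inter_subset_left this
        · rwa [if_neg h] at this
  have hmem' : (n : Cardinal) ∈ {κ : Cardinal.{u} | ∀ A : Set X, κ ≤ #↥A → ∃ U : X → Set X,
      (∀ a ∈ A, IsOpen (U a) ∧ a ∈ U a) ∧ (⋂ a ∈ A, closure (U a)) = ∅} := hmem
  rw [UrysohnNumber]
  apply le_antisymm
  · exact csInf_le' hmem'
  · apply le_csInf ⟨_, hmem'⟩
    intro κ hκ
    by_contra hlt
    push_neg at hlt
    obtain ⟨m, rfl⟩ := Cardinal.lt_aleph0.1 (hlt.trans (Cardinal.nat_lt_aleph0 n))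
    have hm : m < n := Nat.cast_lt.mp hlt
    have hκA : (m : Cardinal) ≤ #↥A := by
      rw [hcard]
      exact_mod_cast Nat.cast_le.mpr (by omega : m ≤ n - 1)
    obtain ⟨U, hU, hempty⟩ := hκ A hκA
    obtain ⟨a, ha⟩ := hA_ne
    have hacap : a ∈ capSet A := hA ▸ ha
    have := hacap U hU
    rw [hempty] at this
    have := this Set.univ isOpen_univ (Set.mem_univ a)
    simp at this
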